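/- Let P̲ be the lower envelope of a nonempty convex set M of finitely additive probabilities on the powerset of Ω, and let B be an event with sup_{P∈M} P(B) > 0. Then for every event A, inf{P(A) : P ∈ M, P(B) > 0} = inf{P(A) : P ∈ M} = P̲(A). -/

import Mathlib

/-- Let `Plow` be the lower envelope of a nonempty convex set `M` of
finitely additive probabilities, and `B` an event with `sup_{P∈M} P B > 0`. Then for
every event `A`, `inf {P A : P ∈ M, P B > 0} = inf {P A : P ∈ M} = Plow A`. -/
theorem stmt18 {Ω : Type*} (M : Set (Set Ω → ℝ)) (hM : M.Nonempty)
    (hprob : ∀ P ∈ M, P Set.univ = 1 ∧ P ∅ = 0 ∧ (∀ E, 0 ≤ P E) ∧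
      (∀ E F : Set Ω, Disjoint E F → P (E ∪ F) = P E + P F))
    (hconv : ∀ P ∈ M, ∀ Q ∈ M, ∀ t : ℝ, 0 ≤ t → t ≤ 1 →
      (fun E => t * P E + (1 - t) * Q E) ∈ M)
    (Plow : Set Ω → ℝ) (hPlow : ∀ E, Plow E = sInf ((fun P => P E) '' M))
    (B : Set Ω) (hB : 0 < sSup ((fun P => P B) '' M)) :
    ∀ A : Set Ω,
      sInf ((fun P => P A) '' {P ∈ M | 0 < P B}) = sInf ((fun P => P A) '' M) ∧
      sInf ((fun P => P A) '' {P ∈ M | 0 < P B}) = Plow A := by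
  -- there exists Q ∈ M with Q B > 0
  obtain ⟨Q, hQM, hQB⟩ : ∃ Q ∈ M, 0 < Q B := by
    by_contra h
    push_neg at h
    have : sSup ((fun P => P B) '' M) ≤ 0 := by
      apply csSup_le (hM.image _)
      rintro x ⟨P, hP, rfl⟩
      exact h P hP
    linarith
  -- every P ∈ M has values in [0,1]
  have hle1 : ∀ P ∈ M, ∀ E : Set Ω, P E ≤ 1 := by
    intro P hP E
    obtain ⟨h1, _, hnn, hadd⟩ := hprob P hP
    have := hadd E Eᶜ disjoint_compl_right
    rw [Set.union_compl_self, h1] at this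
    have := hnn Eᶜ
    linarith
  intro A
  -- basic facts about the images
  have hsub : {P ∈ M | 0 < P B} ⊆ M := fun P hP => hP.1
  have hplusne : ({P ∈ M | 0 < P B}).Nonempty := ⟨Q, hQM, hQB⟩
  have hbddM : BddBelow ((fun P => P A) '' M) := by
    refine ⟨0, ?_⟩
    rintro x ⟨P, hP, rfl⟩
    exact (hprob P hP).2.2.1 A
  have h1 : sInf ((fun P => P A) '' M) ≤ sInf ((fun P => P A) '' {P ∈ M | 0 < P B}) :=
    csInf_le_csInf hbddM (hplusne.image _) (Set.image_mono hsub)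
  have h2 : sInf ((fun P => P A) '' {P ∈ M | 0 < P B}) ≤ sInf ((fun P => P A) '' M) := by
    apply le_csInf (hM.image _)
    rintro x ⟨P, hP, rfl⟩
    -- show sInf over M⁺ ≤ P A using mixtures with Q
    apply le_of_forall_pos_le_add
    intro ε hε
    set δ := min ε 1 with hδ
    have hδ0 : 0 < δ := lt_min hε one_pos
    have hδ1 : δ ≤ 1 := min_le_right _ _
    have ht0 : (0:ℝ) ≤ 1 - δ := by linarith
    have ht1 : (1:ℝ) - δ ≤ 1 := by linarith
    have hR : (fun E => (1 - δ) * P E + (1 - (1 - δ)) * Q E) ∈ M :=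
      hconv P hP Q hQM (1 - δ) ht0 ht1
    have hRB : 0 < (1 - δ) * P B + (1 - (1 - δ)) * Q B := by
      have hPB := (hprob P hP).2.2.1 B
      have := mul_nonneg ht0 hPB
      have h2 : 0 < (1 - (1 - δ)) * Q B := by
        have : (1 - (1 - δ)) = δ := by ring
        rw [this]; exact mul_pos hδ0 hQB
      linarith
    have hmem : (1 - δ) * P A + (1 - (1 - δ)) * Q A ∈
        (fun P => P A) '' {P ∈ M | 0 < P B} := ⟨_, ⟨hR, hRB⟩, rfl⟩
    have hbdd : BddBelow ((fun P => P A) '' {P ∈ M | 0 < P B}) :=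
      hbddM.mono (Set.image_mono hsub)
    calc sInf ((fun P => P A) '' {P ∈ M | 0 < P B})
        ≤ (1 - δ) * P A + (1 - (1 - δ)) * Q A := csInf_le hbdd hmem
      _ ≤ P A + ε := by
          have hPA0 := (hprob P hP).2.2.1 A
          have hQA1 := hle1 Q hQM A
          have hQA0 := (hprob Q hQM).2.2.1 A
          have hδε : δ ≤ ε := min_le_left _ _
          nlinarith
  have heq : sInf ((fun P => P A) '' {P ∈ M | 0 < P B}) = sInf ((fun P => P A) '' M) :=
    le_antisymm h2 h1
  exact ⟨heq, by rw [heq, hPlow]⟩
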